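/- In any dimension d ≥ 1, for all a, c, t > 0 and all x ∈ ℝ^d, the spherical integral ∫_{|z|=1} exp(-|x + ctz|²/(at)) dS(z) is bounded by C(d)(1+t)^{-(d-1)/2} exp(-(|x| - ct)²/(4at)), where C(d) depends only on d (and a, c). -/

import Mathlib

open MeasureTheory Real
open scoped ENNReal

noncomputable section

open Set
open scoped RealInnerProductSpace

namespace SGB

variable {n : ℕ}

/-- sum of squares -/
def sumsq (u : Fin n → ℝ) : ℝ := ∑ i, u i ^ 2

lemma sumsq_nonneg (u : Fin n → ℝ) : 0 ≤ sumsq u :=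
  Finset.sum_nonneg fun i _ => by positivity

lemma sumsq_continuous : Continuous (sumsq (n := n)) :=
  continuous_finset_sum _ fun i _ => (continuous_apply i).pow 2

lemma sumsq_single_le (u : Fin n → ℝ) (i : Fin n) : u i ^ 2 ≤ sumsq u :=
  Finset.single_le_sum (fun j _ => (by positivity : (0:ℝ) ≤ u j ^ 2)) (Finset.mem_univ i)

def psi (u : Fin n → ℝ) : ℝ := Real.sqrt (1 - sumsq u)

lemma psi_continuous : Continuous (psi (n := n)) :=
  Real.continuous_sqrt.comp (continuous_const.sub sumsq_continuous)

def gmap (u : Fin n → ℝ) : EuclideanSpace ℝ (Fin (n+1)) :=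
  (WithLp.equiv 2 _).symm (Fin.cons (psi u) u)

lemma gmap_zero (u : Fin n → ℝ) : gmap u 0 = psi u := by
  simp [gmap, PiLp.toLp_apply]

lemma gmap_succ (u : Fin n → ℝ) (i : Fin n) : gmap u i.succ = u i := by
  simp [gmap, PiLp.toLp_apply]

lemma gmap_continuous : Continuous (gmap (n := n)) := by
  refine (PiLp.continuous_toLp 2 (fun _ : Fin (n+1) => ℝ)).comp ?_
  refine continuous_pi fun i => ?_
  refine Fin.cases ?_ (fun j => ?_) i
  · simpa using psi_continuous
  · simpa using continuous_apply j

lemma normsq {m : ℕ} (z : EuclideanSpace ℝ (Fin m)) : ‖z‖ ^ 2 = ∑ i, z i ^ 2 := by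
  rw [EuclideanSpace.norm_eq, Real.sq_sqrt (by positivity)]
  simp [Real.norm_eq_abs, sq_abs]

lemma norm_gmap (u : Fin n → ℝ) (h : sumsq u ≤ 1) : ‖gmap u‖ = 1 := by
  have h2 : ‖gmap u‖ ^ 2 = 1 := by
    rw [normsq, Fin.sum_univ_succ]
    simp only [gmap_zero, gmap_succ]
    have : psi u ^ 2 = 1 - sumsq u := Real.sq_sqrt (by linarith)
    rw [this]; unfold sumsq; ring
  nlinarith [norm_nonneg (gmap u)]

def e0 : EuclideanSpace ℝ (Fin (n+1)) := EuclideanSpace.single 0 1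

lemma e0_zero : (e0 (n := n)) 0 = 1 := by simp [e0, EuclideanSpace.single_apply]
lemma e0_succ (i : Fin n) : (e0 (n := n)) i.succ = 0 := by
  simp [e0, EuclideanSpace.single_apply, Fin.succ_ne_zero]

lemma norm_e0 : ‖(e0 (n := n))‖ = 1 := by simp [e0, EuclideanSpace.norm_single]

lemma norm_gmap_sub_e0 (u : Fin n → ℝ) :
    ‖gmap u - e0‖ ^ 2 = (psi u - 1) ^ 2 + sumsq u := by
  rw [normsq, Fin.sum_univ_succ]
  simp only [PiLp.sub_apply, gmap_zero, gmap_succ, e0_zero, e0_succ, sub_zero]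
  unfold sumsq; ring

lemma sumsq_le_norm_gmap_sub_e0 (u : Fin n → ℝ) : sumsq u ≤ ‖gmap u - e0‖ ^ 2 := by
  rw [norm_gmap_sub_e0]; nlinarith [sq_nonneg (psi u - 1)]

/-- The ball-like set in parameter space. -/
def bset (h₀ : ℝ) : Set (Fin n → ℝ) := {u | sumsq u ≤ 1 - h₀ ^ 2}

lemma bset_measurable (h₀ : ℝ) : MeasurableSet (bset (n := n) h₀) :=
  (isClosed_le sumsq_continuous continuous_const).measurableSet

lemma bset_subset (h₀ : ℝ) : bset (n := n) h₀ ⊆ Metric.closedBall 0 1 := by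
  intro u hu
  have hu' : sumsq u ≤ 1 := le_trans hu (by nlinarith [sq_nonneg h₀])
  rw [Metric.mem_closedBall, dist_pi_le_iff zero_le_one]
  intro i
  have := sumsq_single_le u i
  rw [Real.dist_eq, Pi.zero_apply, sub_zero]
  rw [abs_le]
  constructor <;> nlinarith

lemma abs_le_one_of_mem {h₀ : ℝ} {u : Fin n → ℝ} (hu : u ∈ bset h₀) (i : Fin n) :
    |u i| ≤ 1 := by
  have h1 : sumsq u ≤ 1 := le_trans hu (by nlinarith [sq_nonneg h₀])
  have := sumsq_single_le u i
  rw [abs_le]; constructor <;> nlinarith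

/-- Lipschitz estimate for the chart `gmap` on `bset h₀`. -/
lemma gmap_lipschitz {h₀ : ℝ} (h1 : 0 < h₀) (h2 : h₀ ≤ 1) :
    LipschitzOnWith (Real.toNNReal (2 * n / h₀ + 1)) gmap (bset (n := n) h₀) := by
  apply LipschitzOnWith.of_dist_le_mul
  intro u hu v hv
  set D := dist u v with hD
  have hD0 : 0 ≤ D := dist_nonneg
  have hcoord : ∀ i, |u i - v i| ≤ D := by
    intro i
    have := dist_le_pi_dist u v i
    rwa [Real.dist_eq] at this
  -- bound |sumsq u - sumsq v|
  have hsumsq : |sumsq u - sumsq v| ≤ 2 * n * D := by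
    have : sumsq u - sumsq v = ∑ i, (u i ^ 2 - v i ^ 2) := by
      unfold sumsq; rw [← Finset.sum_sub_distrib]
    rw [this]
    calc |∑ i, (u i ^ 2 - v i ^ 2)| ≤ ∑ i, |u i ^ 2 - v i ^ 2| :=
          Finset.abs_sum_le_sum_abs _ _
      _ ≤ ∑ _i : Fin n, 2 * D := by
          apply Finset.sum_le_sum
          intro i _
          have h3 : u i ^ 2 - v i ^ 2 = (u i - v i) * (u i + v i) := by ring
          rw [h3, abs_mul]
          have h4 : |u i + v i| ≤ 2 :=
            (abs_add_le _ _).trans (by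
              have := abs_le_one_of_mem hu i
              have := abs_le_one_of_mem hv i
              linarith)
          calc |u i - v i| * |u i + v i| ≤ D * 2 := by
                apply mul_le_mul (hcoord i) h4 (abs_nonneg _) hD0
            _ = 2 * D := by ring
      _ = 2 * n * D := by simp [Finset.sum_const]; ring
  -- bound |psi u - psi v|
  have hub : sumsq u ≤ 1 - h₀ ^ 2 := hu
  have hvb : sumsq v ≤ 1 - h₀ ^ 2 := hv
  have hpsiu : h₀ ≤ psi u := by
    have h' : h₀ ^ 2 ≤ 1 - sumsq u := by linarith
    calc h₀ = Real.sqrt (h₀ ^ 2) := (Real.sqrt_sq h1.le).symm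
      _ ≤ psi u := Real.sqrt_le_sqrt h'
  have hpsiv : h₀ ≤ psi v := by
    have h' : h₀ ^ 2 ≤ 1 - sumsq v := by linarith
    calc h₀ = Real.sqrt (h₀ ^ 2) := (Real.sqrt_sq h1.le).symm
      _ ≤ psi v := Real.sqrt_le_sqrt h'
  have hpsi : |psi u - psi v| ≤ n / h₀ * D := by
    have hprod : |psi u - psi v| * (psi u + psi v) = |sumsq v - sumsq u| := by
      have hity : (psi u - psi v) * (psi u + psi v) = sumsq v - sumsq u := by
        have e1 : psi u ^ 2 = 1 - sumsq u := Real.sq_sqrt (by nlinarith [sq_nonneg h₀])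
        have e2 : psi v ^ 2 = 1 - sumsq v := Real.sq_sqrt (by nlinarith [sq_nonneg h₀])
        nlinarith [e1, e2]
      calc |psi u - psi v| * (psi u + psi v) = |(psi u - psi v) * (psi u + psi v)| := by
            rw [abs_mul, abs_of_nonneg (by linarith : (0:ℝ) ≤ psi u + psi v)]
        _ = |sumsq v - sumsq u| := by rw [hity]
    have h2h : 2 * h₀ ≤ psi u + psi v := by linarith
    have : |psi u - psi v| * (2 * h₀) ≤ 2 * n * D := by
      calc |psi u - psi v| * (2 * h₀) ≤ |psi u - psi v| * (psi u + psi v) :=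
            mul_le_mul_of_nonneg_left h2h (abs_nonneg _)
        _ = |sumsq v - sumsq u| := hprod
        _ = |sumsq u - sumsq v| := abs_sub_comm _ _
        _ ≤ 2 * n * D := hsumsq
    rw [div_mul_eq_mul_div, le_div_iff₀ h1]
    nlinarith
  -- combine
  have key : dist (gmap u) (gmap v) ^ 2 ≤ ((2 * n / h₀ + 1) * D) ^ 2 := by
    rw [dist_eq_norm, normsq]
    have expand : ∑ i, ((gmap u - gmap v) i) ^ 2
        = (psi u - psi v) ^ 2 + ∑ i : Fin n, (u i - v i) ^ 2 := by
      rw [Fin.sum_univ_succ]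
      simp only [PiLp.sub_apply, gmap_zero, gmap_succ]
    rw [expand]
    have t1 : (psi u - psi v) ^ 2 ≤ (n / h₀ * D) ^ 2 := by
      rw [← sq_abs (psi u - psi v)]
      apply pow_le_pow_left₀ (abs_nonneg _) hpsi
    have t2 : ∑ i : Fin n, (u i - v i) ^ 2 ≤ n * D ^ 2 := by
      calc ∑ i : Fin n, (u i - v i) ^ 2 ≤ ∑ _i : Fin n, D ^ 2 := by
            apply Finset.sum_le_sum
            intro i _
            rw [← sq_abs (u i - v i)]
            exact pow_le_pow_left₀ (abs_nonneg _) (hcoord i) 2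
        _ = n * D ^ 2 := by simp [Finset.sum_const, nsmul_eq_mul]
    have hn0 : (0:ℝ) ≤ n := Nat.cast_nonneg n
    have hA : (n:ℝ) ≤ 4 * (n / h₀) := by
      have h' : (n:ℝ) ≤ n / h₀ := by rw [le_div_iff₀ h1]; nlinarith
      linarith
    have e1 : ((2 * (n:ℝ) / h₀ + 1) * D) ^ 2
        = 4 * (((n:ℝ)/h₀) * ((n:ℝ)/h₀) * D^2) + 4 * (((n:ℝ)/h₀) * D^2) + D^2 := by ring
    have e2 : ((n:ℝ)/h₀ * D)^2 = ((n:ℝ)/h₀) * ((n:ℝ)/h₀) * D^2 := by ring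
    have h3 : (n:ℝ) * D^2 ≤ 4 * (((n:ℝ)/h₀) * D^2) := by
      nlinarith [mul_le_mul_of_nonneg_right hA (sq_nonneg D)]
    have h4 : 0 ≤ ((n:ℝ)/h₀) * ((n:ℝ)/h₀) * D^2 := by positivity
    have h5 : 0 ≤ D^2 := sq_nonneg D
    linarith [t1, t2, e1, e2, h3, h4, h5]
  have hKnn : (0:ℝ) ≤ 2 * n / h₀ + 1 := by positivity
  have hKD : 0 ≤ (2 * n / h₀ + 1) * D := by positivity
  have hfin : dist (gmap u) (gmap v) ≤ (2 * n / h₀ + 1) * D := by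
    have h' := Real.sqrt_le_sqrt key
    rwa [Real.sqrt_sq dist_nonneg, Real.sqrt_sq hKD] at h'
  rw [Real.coe_toNNReal _ hKnn]
  exact hfin

lemma cap_param {h₀ : ℝ} (h1 : 0 < h₀) {z : EuclideanSpace ℝ (Fin (n+1))}
    (hz : ‖z‖ = 1) (hz0 : h₀ ≤ z 0) :
    Fin.tail z ∈ bset h₀ ∧ gmap (Fin.tail z) = z := by
  have hz2 : z 0 ^ 2 + sumsq (Fin.tail z) = 1 := by
    have := normsq z
    rw [hz] at this
    rw [Fin.sum_univ_succ] at this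
    unfold sumsq
    simp only [Fin.tail]
    linarith [this.symm]
  have hz00 : 0 < z 0 := lt_of_lt_of_le h1 hz0
  have hb : Fin.tail z ∈ bset h₀ := by
    have : h₀ ^ 2 ≤ z 0 ^ 2 := by nlinarith
    simp only [bset, mem_setOf_eq]
    linarith
  refine ⟨hb, ?_⟩
  have hpsi : psi (Fin.tail z) = z 0 := by
    unfold psi
    have : 1 - sumsq (Fin.tail z) = z 0 ^ 2 := by linarith
    rw [this, Real.sqrt_sq hz00.le]
  ext i
  refine Fin.cases ?_ (fun j => ?_) i
  · rw [gmap_zero, hpsi]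
  · rw [gmap_succ]
    rfl

lemma exists_isometry (p : EuclideanSpace ℝ (Fin (n+1))) (hp : ‖p‖ = 1) :
    ∃ T : EuclideanSpace ℝ (Fin (n+1)) ≃ₗᵢ[ℝ] EuclideanSpace ℝ (Fin (n+1)), T e0 = p :=
  ⟨Submodule.reflection (Submodule.span ℝ {e0 - p})ᗮ, Submodule.reflection_sub (by rw [norm_e0, hp])⟩

lemma cap_restrict_le {h₀ : ℝ} (h1 : 0 < h₀) (h2 : h₀ ≤ 1)
    (T : EuclideanSpace ℝ (Fin (n+1)) ≃ₗᵢ[ℝ] EuclideanSpace ℝ (Fin (n+1))) :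
    μH[(n:ℝ)].restrict
        (Metric.sphere (0 : EuclideanSpace ℝ (Fin (n+1))) 1 ∩ {z | h₀ ≤ ⟪z, T e0⟫}) ≤
      ((Real.toNNReal (2 * n / h₀ + 1) : ℝ≥0∞) ^ (n:ℝ)) •
        Measure.map (⇑T ∘ gmap) (volume.restrict (bset h₀)) := by
  rw [Measure.le_iff]
  intro A hA
  have hGm : Measurable (⇑T ∘ gmap) := (T.continuous.comp gmap_continuous).measurable
  rw [Measure.restrict_apply hA, Measure.smul_apply, Measure.map_apply hGm hA,
      Measure.restrict_apply (hGm hA)]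
  have hsub : A ∩ (Metric.sphere 0 1 ∩ {z | h₀ ≤ ⟪z, T e0⟫}) ⊆
      (⇑T ∘ gmap) '' ((⇑T ∘ gmap) ⁻¹' A ∩ bset h₀) := by
    rintro z ⟨hzA, hzS, hzc⟩
    set w := T.symm z with hw
    have hwn : ‖w‖ = 1 := by
      rw [hw, T.symm.norm_map]
      exact mem_sphere_zero_iff_norm.mp hzS
    have hTw : T w = z := T.apply_symm_apply z
    have hw0 : h₀ ≤ w 0 := by
      have hinner : ⟪w, e0⟫ = w 0 := by
        simp [e0, EuclideanSpace.inner_single_right]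
      have : ⟪w, e0⟫ = ⟪z, T e0⟫ := by
        rw [← T.inner_map_map w e0, hTw]
      rw [hinner] at this
      rw [this]
      exact hzc
    obtain ⟨hb, hg⟩ := cap_param h1 hwn hw0
    refine ⟨Fin.tail w, ⟨?_, hb⟩, ?_⟩
    · show T (gmap (Fin.tail w)) ∈ A
      rw [hg, hTw]; exact hzA
    · show T (gmap (Fin.tail w)) = z
      rw [hg, hTw]
  have lip : LipschitzOnWith (Real.toNNReal (2 * n / h₀ + 1)) (⇑T ∘ gmap) (bset h₀) := by
    have := T.isometry.lipschitz.comp_lipschitzOnWith (gmap_lipschitz h1 h2)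
    simpa using this
  have hn0 : (0:ℝ) ≤ (n:ℝ) := Nat.cast_nonneg n
  calc μH[(n:ℝ)] (A ∩ (Metric.sphere 0 1 ∩ {z | h₀ ≤ ⟪z, T e0⟫}))
      ≤ μH[(n:ℝ)] ((⇑T ∘ gmap) '' ((⇑T ∘ gmap) ⁻¹' A ∩ bset h₀)) := measure_mono hsub
    _ ≤ (Real.toNNReal (2 * n / h₀ + 1) : ℝ≥0∞) ^ (n:ℝ) *
          μH[(n:ℝ)] ((⇑T ∘ gmap) ⁻¹' A ∩ bset h₀) :=
        (lip.mono inter_subset_right).hausdorffMeasure_image_le hn0 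
    _ = (Real.toNNReal (2 * n / h₀ + 1) : ℝ≥0∞) ^ (n:ℝ) *
          volume ((⇑T ∘ gmap) ⁻¹' A ∩ bset h₀) := by
        congr 1
        have : ((n:ℝ)) = ((Fintype.card (Fin n) : ℕ) : ℝ) := by simp
        rw [this, hausdorffMeasure_pi_real]


lemma integrableOn_of_bound {α : Type*} [MeasurableSpace α] [TopologicalSpace α]
    [OpensMeasurableSpace α] (μ : Measure α) (s : Set α) (hs : μ s ≠ ∞)
    {f : α → ℝ} (hf : Continuous f) (hb : ∀ x, |f x| ≤ 1) : IntegrableOn f s μ := by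
  haveI : IsFiniteMeasure (μ.restrict s) :=
    ⟨by rwa [Measure.restrict_apply_univ, lt_top_iff_ne_top]⟩
  exact (integrable_const 1).mono' hf.aestronglyMeasurable
    (ae_of_all _ (by simpa [Real.norm_eq_abs] using hb))

lemma bset_vol_lt_top (h₀ : ℝ) : volume (bset (n := n) h₀) < ∞ :=
  lt_of_le_of_lt (measure_mono (bset_subset h₀)) measure_closedBall_lt_top

lemma gauss_cont (lam : ℝ) : Continuous (fun u : Fin n → ℝ => Real.exp (-lam * sumsq u)) :=
  Real.continuous_exp.comp (continuous_const.mul sumsq_continuous)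

lemma gauss_bd (lam : ℝ) (hlam : 0 ≤ lam) (u : Fin n → ℝ) :
    |Real.exp (-lam * sumsq u)| ≤ 1 := by
  rw [abs_of_pos (Real.exp_pos _)]
  apply Real.exp_le_one_iff.mpr
  have := sumsq_nonneg u
  nlinarith

lemma cap_integral_le {h₀ : ℝ} (h1 : 0 < h₀) (h2 : h₀ ≤ 1)
    (T : EuclideanSpace ℝ (Fin (n+1)) ≃ₗᵢ[ℝ] EuclideanSpace ℝ (Fin (n+1)))
    (lam : ℝ) (hlam : 0 ≤ lam) :
    ∫ z in Metric.sphere (0 : EuclideanSpace ℝ (Fin (n+1))) 1 ∩ {z | h₀ ≤ ⟪z, T e0⟫},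
        Real.exp (-lam * ‖z - T e0‖ ^ 2) ∂μH[(n:ℝ)] ≤
      (2 * n / h₀ + 1) ^ (n:ℝ) *
        ∫ u in bset (n := n) h₀, Real.exp (-lam * sumsq u) := by
  have hKnn : (0:ℝ) ≤ 2 * n / h₀ + 1 := by positivity
  set f : EuclideanSpace ℝ (Fin (n+1)) → ℝ := fun z => Real.exp (-lam * ‖z - T e0‖ ^ 2) with hf
  have hfc : Continuous f :=
    Real.continuous_exp.comp (continuous_const.mul
      (((continuous_id.sub continuous_const).norm).pow 2))
  have hfb : ∀ z, |f z| ≤ 1 := by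
    intro z
    rw [hf, abs_of_pos (Real.exp_pos _)]
    apply Real.exp_le_one_iff.mpr
    nlinarith [sq_nonneg ‖z - T e0‖, mul_nonneg hlam (sq_nonneg ‖z - T e0‖)]
  have hf0 : ∀ z, 0 ≤ f z := fun z => (Real.exp_pos _).le
  have hGm : Measurable (⇑T ∘ gmap) := (T.continuous.comp gmap_continuous).measurable
  have hKtop : ((Real.toNNReal (2 * n / h₀ + 1) : ℝ≥0∞) ^ (n:ℝ)) ≠ ∞ :=
    ENNReal.rpow_ne_top_of_nonneg (Nat.cast_nonneg n) ENNReal.coe_ne_top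
  have hcomp : IntegrableOn (f ∘ (⇑T ∘ gmap)) (bset h₀) volume :=
    integrableOn_of_bound volume _ (bset_vol_lt_top h₀).ne
      (hfc.comp (T.continuous.comp gmap_continuous)) (fun u => hfb _)
  have hint_map : Integrable f (Measure.map (⇑T ∘ gmap) (volume.restrict (bset h₀))) := by
    rw [integrable_map_measure hfc.aestronglyMeasurable hGm.aemeasurable]
    exact hcomp
  have hint : Integrable f (((Real.toNNReal (2 * n / h₀ + 1) : ℝ≥0∞) ^ (n:ℝ)) •
      Measure.map (⇑T ∘ gmap) (volume.restrict (bset h₀))) :=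
    hint_map.smul_measure hKtop
  calc ∫ z in Metric.sphere (0 : EuclideanSpace ℝ (Fin (n+1))) 1 ∩ {z | h₀ ≤ ⟪z, T e0⟫},
          f z ∂μH[(n:ℝ)]
      ≤ ∫ z, f z ∂(((Real.toNNReal (2 * n / h₀ + 1) : ℝ≥0∞) ^ (n:ℝ)) •
          Measure.map (⇑T ∘ gmap) (volume.restrict (bset h₀))) :=
        integral_mono_measure (cap_restrict_le h1 h2 T) (ae_of_all _ hf0) hint
    _ = (2 * n / h₀ + 1) ^ (n:ℝ) *
          ∫ z, f z ∂(Measure.map (⇑T ∘ gmap) (volume.restrict (bset h₀))) := by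
        rw [integral_smul_measure]
        congr 1
        rw [← ENNReal.toReal_rpow, ENNReal.coe_toReal, Real.coe_toNNReal _ hKnn]
    _ = (2 * n / h₀ + 1) ^ (n:ℝ) * ∫ u in bset (n := n) h₀, f (T (gmap u)) := by
        rw [integral_map hGm.aemeasurable hfc.aestronglyMeasurable]
        rfl
    _ ≤ (2 * n / h₀ + 1) ^ (n:ℝ) * ∫ u in bset (n := n) h₀, Real.exp (-lam * sumsq u) := by
        apply mul_le_mul_of_nonneg_left _ (by positivity)
        apply setIntegral_mono_on hcomp
          (integrableOn_of_bound volume _ (bset_vol_lt_top h₀).ne (gauss_cont lam)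
            (gauss_bd lam hlam)) (bset_measurable h₀)
        intro u _
        show f (T (gmap u)) ≤ _
        rw [hf]
        apply Real.exp_le_exp.mpr
        have hnorm : ‖T (gmap u) - T e0‖ ^ 2 = ‖gmap u - e0‖ ^ 2 := by
          rw [← map_sub, T.norm_map]
        rw [hnorm]
        nlinarith [sumsq_le_norm_gmap_sub_e0 u, hlam,
          mul_le_mul_of_nonneg_left (sumsq_le_norm_gmap_sub_e0 u) hlam]


lemma gauss_bound :
    ∃ C : ℝ, 0 < C ∧ ∀ lam : ℝ, 0 ≤ lam → ∀ h₀ : ℝ,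
      ∫ u in bset (n := n) h₀, Real.exp (-lam * sumsq u) ≤
        C * (1 + lam) ^ (-(n:ℝ)/2) := by
  set V : ℝ := (volume (Metric.closedBall (0 : Fin n → ℝ) 1)).toReal with hV
  have hV0 : 0 ≤ V := ENNReal.toReal_nonneg
  refine ⟨V * 2 ^ ((n:ℝ)/2) + (2*π) ^ ((n:ℝ)/2), by positivity, ?_⟩
  intro lam hlam h₀
  have h1lam : (0:ℝ) < 1 + lam := by linarith
  have hIb : IntegrableOn (fun u => Real.exp (-lam * sumsq u)) (bset (n := n) h₀) volume :=
    integrableOn_of_bound volume _ (bset_vol_lt_top h₀).ne (gauss_cont lam) (gauss_bd lam hlam)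
  have hrpow_pos : (0:ℝ) < (1 + lam) ^ (-(n:ℝ)/2) := Real.rpow_pos_of_pos h1lam _
  rcases le_or_gt lam 1 with hc | hc
  · -- small lam : use the volume bound
    have step1 : ∫ u in bset (n := n) h₀, Real.exp (-lam * sumsq u) ≤ V := by
      calc ∫ u in bset (n := n) h₀, Real.exp (-lam * sumsq u)
          ≤ ∫ _u in bset (n := n) h₀, (1:ℝ) := by
            apply setIntegral_mono_on hIb
              (integrableOn_of_bound volume _ (bset_vol_lt_top h₀).ne continuous_const
                (fun _ => by norm_num)) (bset_measurable h₀)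
            intro u _
            have := gauss_bd (n := n) lam hlam u
            rw [abs_of_pos (Real.exp_pos _)] at this
            exact this
        _ = (volume (bset (n := n) h₀)).toReal := by
            rw [setIntegral_const]; simp; rfl
        _ ≤ V := by
            apply ENNReal.toReal_mono measure_closedBall_lt_top.ne
            exact measure_mono (bset_subset h₀)
    have step2 : (1:ℝ) ≤ 2 ^ ((n:ℝ)/2) * (1 + lam) ^ (-(n:ℝ)/2) := by
      have hmono : (1 + lam) ^ ((n:ℝ)/2) ≤ 2 ^ ((n:ℝ)/2) :=
        Real.rpow_le_rpow (by linarith) (by linarith) (by positivity)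
      have hne : (1 + lam) ^ ((n:ℝ)/2) > 0 := Real.rpow_pos_of_pos h1lam _
      rw [neg_div, Real.rpow_neg h1lam.le, ← div_eq_mul_inv, le_div_iff₀ hne, one_mul]
      exact hmono
    calc ∫ u in bset (n := n) h₀, Real.exp (-lam * sumsq u) ≤ V := step1
      _ = V * 1 := by ring
      _ ≤ V * (2 ^ ((n:ℝ)/2) * (1 + lam) ^ (-(n:ℝ)/2)) :=
          mul_le_mul_of_nonneg_left step2 hV0
      _ ≤ (V * 2 ^ ((n:ℝ)/2) + (2*π) ^ ((n:ℝ)/2)) * (1 + lam) ^ (-(n:ℝ)/2) := by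
          have : (0:ℝ) ≤ (2*π) ^ ((n:ℝ)/2) := by positivity
          nlinarith [hrpow_pos]
  · -- large lam : use the full gaussian integral
    have hlam0 : (0:ℝ) < lam := by linarith
    have hprod : (fun u : Fin n → ℝ => Real.exp (-lam * sumsq u)) =
        fun u => ∏ i, Real.exp (-lam * (u i) ^ 2) := by
      funext u
      rw [← Real.exp_sum]
      congr 1
      unfold sumsq
      rw [Finset.mul_sum]
    have hind : Integrable (fun u : Fin n → ℝ => Real.exp (-lam * sumsq u)) volume := by
      rw [hprod]
      exact Integrable.fintype_prod (fun _ => integrable_exp_neg_mul_sq hlam0)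
    have step1 : ∫ u in bset (n := n) h₀, Real.exp (-lam * sumsq u) ≤
        (π / lam) ^ ((n:ℝ)/2) := by
      calc ∫ u in bset (n := n) h₀, Real.exp (-lam * sumsq u)
          ≤ ∫ u : Fin n → ℝ, Real.exp (-lam * sumsq u) :=
            setIntegral_le_integral hind (ae_of_all _ fun u => (Real.exp_pos _).le)
        _ = (∫ x : ℝ, Real.exp (-lam * x ^ 2)) ^ n := by
            rw [hprod, volume_pi, integral_fintype_prod_eq_pow
              (fun x : ℝ => Real.exp (-lam * x ^ 2))]
            simp
        _ = (π / lam) ^ ((n:ℝ)/2) := by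
            rw [integral_gaussian, Real.sqrt_eq_rpow, ← Real.rpow_natCast
              ((π / lam) ^ ((1:ℝ)/2)) n, ← Real.rpow_mul (by positivity)]
            congr 1
            ring
    have step2 : (π / lam) ^ ((n:ℝ)/2) ≤ (2*π) ^ ((n:ℝ)/2) * (1 + lam) ^ (-(n:ℝ)/2) := by
      have hbase : π / lam ≤ 2*π / (1 + lam) := by
        rw [div_le_div_iff₀ hlam0 h1lam]
        nlinarith [Real.pi_pos]
      calc (π / lam) ^ ((n:ℝ)/2) ≤ (2*π / (1 + lam)) ^ ((n:ℝ)/2) :=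
            Real.rpow_le_rpow (by positivity) hbase (by positivity)
        _ = (2*π) ^ ((n:ℝ)/2) * (1 + lam) ^ (-(n:ℝ)/2) := by
            rw [Real.div_rpow (by positivity) h1lam.le, neg_div,
              Real.rpow_neg h1lam.le]
            ring
    calc ∫ u in bset (n := n) h₀, Real.exp (-lam * sumsq u)
        ≤ (π / lam) ^ ((n:ℝ)/2) := step1
      _ ≤ (2*π) ^ ((n:ℝ)/2) * (1 + lam) ^ (-(n:ℝ)/2) := step2
      _ ≤ (V * 2 ^ ((n:ℝ)/2) + (2*π) ^ ((n:ℝ)/2)) * (1 + lam) ^ (-(n:ℝ)/2) := by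
          have h2 : (0:ℝ) ≤ V * 2 ^ ((n:ℝ)/2) := by positivity
          nlinarith [hrpow_pos]


lemma polyexp (s γ : ℝ) (hs : 0 ≤ s) (hγ : 0 < γ) :
    ∃ C : ℝ, 0 < C ∧ ∀ x : ℝ, 0 ≤ x → (1+x) ^ s ≤ C * Real.exp (γ * x) := by
  set m := ⌈s⌉₊ with hm
  rcases Nat.eq_zero_or_pos m with hm0 | hm0
  · refine ⟨1, one_pos, fun x hx => ?_⟩
    have hs0 : s = 0 := le_antisymm (by exact_mod_cast Nat.ceil_eq_zero.mp hm0) hs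
    rw [hs0, Real.rpow_zero, one_mul]
    exact Real.one_le_exp (by positivity)
  · have hmR : (0:ℝ) < m := by exact_mod_cast hm0
    set δ : ℝ := min 1 (γ / m) with hδ
    have hδ0 : 0 < δ := lt_min one_pos (by positivity)
    refine ⟨δ⁻¹ ^ m, by positivity, fun x hx => ?_⟩
    have h1x : (1:ℝ) ≤ 1 + x := by linarith
    have step1 : (1+x) ^ s ≤ (1+x) ^ (m:ℝ) :=
      Real.rpow_le_rpow_of_exponent_le h1x (Nat.le_ceil s)
    rw [Real.rpow_natCast] at step1
    have step2 : δ * (1+x) ≤ 1 + γ * x / m := by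
      have d1 : δ ≤ 1 := min_le_left _ _
      have d2 : δ ≤ γ / m := min_le_right _ _
      have h3 : δ * x ≤ (γ/m) * x := mul_le_mul_of_nonneg_right d2 hx
      have h4 : (γ/m) * x = γ * x / m := by ring
      nlinarith
    have step3 : (δ * (1+x)) ^ m ≤ Real.exp (γ * x) := by
      calc (δ * (1+x)) ^ m ≤ (1 + γ * x / m) ^ m :=
            pow_le_pow_left₀ (by positivity) step2 m
        _ ≤ Real.exp (γ * x / m) ^ m := by
            apply pow_le_pow_left₀ (by positivity)
            linarith [Real.add_one_le_exp (γ * x / m)]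
        _ = Real.exp (γ * x) := by
            rw [← Real.exp_nat_mul]
            congr 1
            field_simp
    have hfact : (1+x) ^ m = δ⁻¹ ^ m * (δ * (1+x)) ^ m := by
      rw [← mul_pow]
      congr 1
      field_simp
    calc (1+x) ^ s ≤ (1+x) ^ m := step1
      _ = δ⁻¹ ^ m * (δ * (1+x)) ^ m := hfact
      _ ≤ δ⁻¹ ^ m * Real.exp (γ * x) :=
          mul_le_mul_of_nonneg_left step3 (by positivity)

lemma cap_meas_lt_top {h₀ : ℝ} (h1 : 0 < h₀) (h2 : h₀ ≤ 1)
    (T : EuclideanSpace ℝ (Fin (n+1)) ≃ₗᵢ[ℝ] EuclideanSpace ℝ (Fin (n+1))) :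
    μH[(n:ℝ)] (Metric.sphere (0 : EuclideanSpace ℝ (Fin (n+1))) 1 ∩
      {z | h₀ ≤ ⟪z, T e0⟫}) < ∞ := by
  have hGm : Measurable (⇑T ∘ gmap) := (T.continuous.comp gmap_continuous).measurable
  have h' := Measure.le_iff'.mp (cap_restrict_le h1 h2 T) univ
  rw [Measure.restrict_apply_univ] at h'
  refine lt_of_le_of_lt h' ?_
  rw [Measure.smul_apply, smul_eq_mul]
  apply ENNReal.mul_lt_top
  · exact (ENNReal.rpow_ne_top_of_nonneg (Nat.cast_nonneg n) ENNReal.coe_ne_top).lt_top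
  · rw [Measure.map_apply hGm MeasurableSet.univ, preimage_univ,
      Measure.restrict_apply_univ]
    exact bset_vol_lt_top h₀

lemma sphere_lt_top :
    μH[(n:ℝ)] (Metric.sphere (0 : EuclideanSpace ℝ (Fin (n+1))) 1) < ∞ := by
  set h₀ : ℝ := Real.sqrt (1 / (n+1)) with hh₀
  have hn1 : (0:ℝ) < (n:ℝ)+1 := by positivity
  have h1 : 0 < h₀ := Real.sqrt_pos.mpr (by positivity)
  have h2 : h₀ ≤ 1 := by
    rw [hh₀, show (1:ℝ) = Real.sqrt 1 from Real.sqrt_one.symm]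
    apply Real.sqrt_le_sqrt
    rw [Real.sqrt_one, div_le_one hn1]
    linarith
  have hsq : h₀ ^ 2 = 1 / ((n:ℝ)+1) := Real.sq_sqrt (by positivity)
  have hex : ∀ q : Fin (n+1) × Bool,
      ∃ T : EuclideanSpace ℝ (Fin (n+1)) ≃ₗᵢ[ℝ] EuclideanSpace ℝ (Fin (n+1)),
        T e0 = EuclideanSpace.single q.1 (if q.2 then (1:ℝ) else -1) := by
    intro q
    apply exists_isometry
    rw [EuclideanSpace.norm_single]
    cases q.2 <;> norm_num
  choose T hT using hex
  have hcover : Metric.sphere (0 : EuclideanSpace ℝ (Fin (n+1))) 1 ⊆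
      ⋃ q : Fin (n+1) × Bool,
        (Metric.sphere (0 : EuclideanSpace ℝ (Fin (n+1))) 1 ∩ {z | h₀ ≤ ⟪z, T q e0⟫}) := by
    intro z hz
    have hzn : ‖z‖ = 1 := mem_sphere_zero_iff_norm.mp hz
    have hzsum : ∑ i, z i ^ 2 = 1 := by rw [← normsq, hzn]; norm_num
    have hexist : ∃ i, 1 / ((n:ℝ)+1) ≤ z i ^ 2 := by
      by_contra hno
      push_neg at hno
      have : ∑ i, z i ^ 2 < ∑ _i : Fin (n+1), 1 / ((n:ℝ)+1) :=
        Finset.sum_lt_sum_of_nonempty Finset.univ_nonempty (fun i _ => hno i)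
      rw [hzsum, Finset.sum_const, Finset.card_univ, Fintype.card_fin, nsmul_eq_mul] at this
      push_cast at this
      rw [mul_one_div, div_self (ne_of_gt hn1)] at this
      exact lt_irrefl _ this
    obtain ⟨i, hi⟩ := hexist
    have habs : h₀ ≤ |z i| := by
      have h3 : h₀ ^ 2 ≤ |z i| ^ 2 := by rw [sq_abs, hsq]; exact hi
      nlinarith [abs_nonneg (z i), h1]
    rcases le_or_gt 0 (z i) with hzi | hzi
    · refine mem_iUnion.mpr ⟨⟨i, true⟩, hz, ?_⟩
      have : ⟪z, T ⟨i, true⟩ e0⟫ = z i := by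
        rw [hT ⟨i, true⟩]
        simp [EuclideanSpace.inner_single_right]
      rw [mem_setOf_eq, this]
      rwa [abs_of_nonneg hzi] at habs
    · refine mem_iUnion.mpr ⟨⟨i, false⟩, hz, ?_⟩
      have : ⟪z, T ⟨i, false⟩ e0⟫ = -z i := by
        rw [hT ⟨i, false⟩]
        simp [EuclideanSpace.inner_single_right]
      rw [mem_setOf_eq, this]
      rwa [abs_of_neg hzi] at habs
  calc μH[(n:ℝ)] (Metric.sphere (0 : EuclideanSpace ℝ (Fin (n+1))) 1)
      ≤ μH[(n:ℝ)] (⋃ q : Fin (n+1) × Bool,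
          (Metric.sphere (0 : EuclideanSpace ℝ (Fin (n+1))) 1 ∩ {z | h₀ ≤ ⟪z, T q e0⟫})) :=
        measure_mono hcover
    _ ≤ ∑' q : Fin (n+1) × Bool, μH[(n:ℝ)]
          (Metric.sphere (0 : EuclideanSpace ℝ (Fin (n+1))) 1 ∩ {z | h₀ ≤ ⟪z, T q e0⟫}) :=
        measure_iUnion_le _
    _ < ∞ := by
        rw [tsum_fintype]
        apply ENNReal.sum_lt_top.mpr
        intro q _
        exact cap_meas_lt_top h1 h2 (T q)


lemma laplace_bound :
    ∃ C : ℝ, 0 < C ∧ ∀ lam : ℝ, 0 ≤ lam →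
      ∀ e : EuclideanSpace ℝ (Fin (n+1)), ‖e‖ = 1 →
        ∫ z in Metric.sphere (0 : EuclideanSpace ℝ (Fin (n+1))) 1,
            Real.exp (-lam * ‖z + e‖ ^ 2) ∂μH[(n:ℝ)] ≤ C * (1 + lam) ^ (-(n:ℝ)/2) := by
  obtain ⟨C₀, hC₀, hgauss⟩ := gauss_bound (n := n)
  obtain ⟨C₁, hC₁, hpe⟩ := polyexp ((n:ℝ)/2) (1/2) (by positivity) one_half_pos
  set M : ℝ := (μH[(n:ℝ)] (Metric.sphere (0 : EuclideanSpace ℝ (Fin (n+1))) 1)).toReal with hM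
  have hM0 : 0 ≤ M := ENNReal.toReal_nonneg
  have hMfin := sphere_lt_top (n := n)
  refine ⟨(2*(n:ℝ)/(3/4)+1) ^ (n:ℝ) * C₀ + M * C₁, by positivity, ?_⟩
  intro lam hlam e he
  obtain ⟨T, hT⟩ := exists_isometry (-e) (by rw [norm_neg, he])
  set f : EuclideanSpace ℝ (Fin (n+1)) → ℝ :=
    fun z => Real.exp (-lam * ‖z - T e0‖ ^ 2) with hf
  have hfc : Continuous f :=
    Real.continuous_exp.comp (continuous_const.mul
      (((continuous_id.sub continuous_const).norm).pow 2))
  have hfb : ∀ z, |f z| ≤ 1 := by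
    intro z
    rw [hf, abs_of_pos (Real.exp_pos _)]
    apply Real.exp_le_one_iff.mpr
    nlinarith [sq_nonneg ‖z - T e0‖, mul_nonneg hlam (sq_nonneg ‖z - T e0‖)]
  have hf0 : ∀ z, 0 ≤ f z := fun z => (Real.exp_pos _).le
  have hSmeas : MeasurableSet (Metric.sphere (0 : EuclideanSpace ℝ (Fin (n+1))) 1) :=
    Metric.isClosed_sphere.measurableSet
  have hrwint : ∫ z in Metric.sphere (0 : EuclideanSpace ℝ (Fin (n+1))) 1,
      Real.exp (-lam * ‖z + e‖ ^ 2) ∂μH[(n:ℝ)] =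
      ∫ z in Metric.sphere (0 : EuclideanSpace ℝ (Fin (n+1))) 1, f z ∂μH[(n:ℝ)] := by
    apply setIntegral_congr_fun hSmeas
    intro z _
    rw [hf]
    simp only []
    rw [hT, sub_neg_eq_add]
  rw [hrwint]
  set H : Set (EuclideanSpace ℝ (Fin (n+1))) := {z | (3/4:ℝ) ≤ ⟪z, T e0⟫} with hH
  have hHmeas : MeasurableSet H :=
    (isClosed_le continuous_const (Continuous.inner continuous_id continuous_const)).measurableSet
  set S := Metric.sphere (0 : EuclideanSpace ℝ (Fin (n+1))) 1 with hS
  have hIcap : IntegrableOn f (S ∩ H) μH[(n:ℝ)] :=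
    integrableOn_of_bound _ _ ((measure_mono inter_subset_left).trans_lt hMfin).ne hfc hfb
  have hIdiff : IntegrableOn f (S \ H) μH[(n:ℝ)] :=
    integrableOn_of_bound _ _ ((measure_mono diff_subset).trans_lt hMfin).ne hfc hfb
  have hsplit : ∫ z in S, f z ∂μH[(n:ℝ)] =
      (∫ z in S ∩ H, f z ∂μH[(n:ℝ)]) + ∫ z in S \ H, f z ∂μH[(n:ℝ)] := by
    rw [← setIntegral_union (Set.disjoint_left.mpr fun z hz1 hz2 => hz2.2 hz1.2)
      (hSmeas.diff hHmeas) hIcap hIdiff, inter_union_diff]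
  rw [hsplit]
  -- cap part
  have hcap : ∫ z in S ∩ H, f z ∂μH[(n:ℝ)] ≤
      (2*(n:ℝ)/(3/4)+1) ^ (n:ℝ) * (C₀ * (1 + lam) ^ (-(n:ℝ)/2)) := by
    calc ∫ z in S ∩ H, f z ∂μH[(n:ℝ)]
        ≤ (2*(n:ℝ)/(3/4)+1) ^ (n:ℝ) *
            ∫ u in bset (n := n) (3/4), Real.exp (-lam * sumsq u) :=
          cap_integral_le (by norm_num) (by norm_num) T lam hlam
      _ ≤ (2*(n:ℝ)/(3/4)+1) ^ (n:ℝ) * (C₀ * (1 + lam) ^ (-(n:ℝ)/2)) := by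
          apply mul_le_mul_of_nonneg_left (hgauss lam hlam (3/4)) (by positivity)
  -- complement part
  have hdiff : ∫ z in S \ H, f z ∂μH[(n:ℝ)] ≤ M * (C₁ * (1 + lam) ^ (-(n:ℝ)/2)) := by
    have h1lam : (0:ℝ) < 1 + lam := by linarith
    have hpt : ∀ z ∈ S \ H, f z ≤ Real.exp (-((1:ℝ)/2) * lam) := by
      rintro z ⟨hzS, hzH⟩
      have hzn : ‖z‖ = 1 := mem_sphere_zero_iff_norm.mp hzS
      have hzi : ⟪z, T e0⟫ < 3/4 := lt_of_not_ge hzH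
      have hTn : ‖T e0‖ = 1 := by rw [T.norm_map, norm_e0]
      have hns : ‖z - T e0‖ ^ 2 = 2 - 2 * ⟪z, T e0⟫ := by
        rw [norm_sub_sq_real, hzn, hTn]
        ring
      have hge : (1:ℝ)/2 ≤ ‖z - T e0‖ ^ 2 := by rw [hns]; linarith
      rw [hf]
      apply Real.exp_le_exp.mpr
      nlinarith
    calc ∫ z in S \ H, f z ∂μH[(n:ℝ)]
        ≤ ∫ _z in S \ H, Real.exp (-((1:ℝ)/2) * lam) ∂μH[(n:ℝ)] := by
          apply setIntegral_mono_on hIdiff _ (hSmeas.diff hHmeas) hpt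
          exact integrableOn_const ((measure_mono diff_subset).trans_lt hMfin).ne
      _ = (μH[(n:ℝ)] (S \ H)).toReal * Real.exp (-((1:ℝ)/2) * lam) := by
          rw [setIntegral_const, smul_eq_mul]; rfl
      _ ≤ M * Real.exp (-((1:ℝ)/2) * lam) := by
          apply mul_le_mul_of_nonneg_right _ (Real.exp_pos _).le
          exact ENNReal.toReal_mono hMfin.ne (measure_mono diff_subset)
      _ ≤ M * (C₁ * (1 + lam) ^ (-(n:ℝ)/2)) := by
          apply mul_le_mul_of_nonneg_left _ hM0
          have h2 := hpe lam hlam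
          have hrp : (0:ℝ) < (1 + lam) ^ ((n:ℝ)/2) := Real.rpow_pos_of_pos h1lam _
          have hkey : 1 / Real.exp ((1/2) * lam) ≤ C₁ / (1 + lam) ^ ((n:ℝ)/2) := by
            rw [div_le_div_iff₀ (Real.exp_pos _) hrp, one_mul]
            linarith
          have e1 : Real.exp (-((1:ℝ)/2) * lam) = 1 / Real.exp ((1/2) * lam) := by
            rw [show -((1:ℝ)/2) * lam = -((1/2) * lam) by ring, Real.exp_neg]
            exact (one_div _).symm
          have e2 : C₁ / (1 + lam) ^ ((n:ℝ)/2) = C₁ * (1 + lam) ^ (-(n:ℝ)/2) := by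
            rw [neg_div, Real.rpow_neg h1lam.le]
            ring
          rw [e1, ← e2]
          exact hkey
  have hfin : (0:ℝ) ≤ (1 + lam) ^ (-(n:ℝ)/2) := (Real.rpow_pos_of_pos (by linarith) _).le
  calc (∫ z in S ∩ H, f z ∂μH[(n:ℝ)]) + ∫ z in S \ H, f z ∂μH[(n:ℝ)]
      ≤ (2*(n:ℝ)/(3/4)+1) ^ (n:ℝ) * (C₀ * (1 + lam) ^ (-(n:ℝ)/2)) +
        M * (C₁ * (1 + lam) ^ (-(n:ℝ)/2)) := add_le_add hcap hdiff
    _ = ((2*(n:ℝ)/(3/4)+1) ^ (n:ℝ) * C₀ + M * C₁) * (1 + lam) ^ (-(n:ℝ)/2) := by ring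


lemma exp_neg_le (C s y u : ℝ) (hu : 0 < 1 + u)
    (h : (1+u) ^ s ≤ C * Real.exp y) : Real.exp (-y) ≤ C * (1+u) ^ (-s) := by
  have hrp : 0 < (1+u) ^ s := Real.rpow_pos_of_pos hu s
  have h1 : 1 / Real.exp y ≤ C / (1+u) ^ s := by
    rw [div_le_div_iff₀ (Real.exp_pos _) hrp, one_mul]
    linarith
  rw [Real.exp_neg]
  calc (Real.exp y)⁻¹ = 1 / Real.exp y := (one_div _).symm
    _ ≤ C / (1+u) ^ s := h1
    _ = C * (1+u) ^ (-s) := by rw [Real.rpow_neg hu.le]; ring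

lemma rpow_neg_mono {A B : ℝ} (hA : 0 < A) (hAB : A ≤ B) (s : ℝ) (hs : 0 ≤ s) :
    B ^ (-s) ≤ A ^ (-s) := by
  have hB : 0 < B := lt_of_lt_of_le hA hAB
  rw [Real.rpow_neg hA.le, Real.rpow_neg hB.le]
  apply inv_anti₀ (Real.rpow_pos_of_pos hA s)
  exact Real.rpow_le_rpow hA.le hAB hs

end SGB


set_option maxHeartbeats 1000000

/-- Bound for the spherical integral of a translated Gaussian:
`∫_{|z|=1} exp(-|x+ctz|²/(at)) dS(z) ≤ C(d) (1+t)^{-(d-1)/2} exp(-(|x|-ct)²/(4at))`.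
The surface measure on the unit sphere is the `(d-1)`-dimensional Hausdorff measure. -/
theorem sphere_gaussian_integral_bound (d : ℕ) (hd : 1 ≤ d) (a c : ℝ)
    (ha : 0 < a) (hc : 0 < c) :
    ∃ C : ℝ, 0 < C ∧ ∀ t : ℝ, 0 < t → ∀ x : EuclideanSpace ℝ (Fin d),
      (∫ z in Metric.sphere (0 : EuclideanSpace ℝ (Fin d)) 1,
          exp (-‖x + (c * t) • z‖ ^ 2 / (a * t)) ∂(μH[(d : ℝ) - 1])) ≤
        C * (1 + t) ^ (-((d : ℝ) - 1) / 2) * exp (-(‖x‖ - c * t) ^ 2 / (4 * a * t)) := by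
  obtain ⟨n, rfl⟩ : ∃ n, d = n + 1 := ⟨d - 1, (Nat.succ_pred_eq_of_pos hd).symm⟩
  simp only [Nat.cast_add, Nat.cast_one, add_sub_cancel_right]
  obtain ⟨C₁, hC₁, hlap⟩ := SGB.laplace_bound (n := n)
  obtain ⟨C₂, hC₂, hpe⟩ := SGB.polyexp ((n:ℝ)/2) (3*c^2/(16*a)) (by positivity) (by positivity)
  set m₀ : ℝ := min 1 (c^2/(2*a)) with hm₀
  have hm₀0 : 0 < m₀ := lt_min one_pos (by positivity)
  refine ⟨C₁ * (C₂ + m₀ ^ (-(n:ℝ)/2)), by positivity, ?_⟩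
  intro t ht x
  have hat : (0:ℝ) < a * t := by positivity
  set r : ℝ := ‖x‖ with hr
  have hr0 : 0 ≤ r := norm_nonneg x
  obtain ⟨e, he, hxe⟩ : ∃ e : EuclideanSpace ℝ (Fin (n+1)), ‖e‖ = 1 ∧ x = r • e := by
    by_cases hx0 : x = 0
    · refine ⟨SGB.e0, SGB.norm_e0, ?_⟩
      have : r = 0 := by rw [hr, hx0, norm_zero]
      rw [hx0, this, zero_smul]
    · refine ⟨‖x‖⁻¹ • x, ?_, ?_⟩
      · exact norm_smul_inv_norm hx0
      · rw [smul_smul, hr, mul_inv_cancel₀ (norm_ne_zero_iff.mpr hx0), one_smul]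
  set lam : ℝ := c * r / a with hlamdef
  have hlam0 : 0 ≤ lam := by positivity
  have hSmeas : MeasurableSet (Metric.sphere (0 : EuclideanSpace ℝ (Fin (n+1))) 1) :=
    Metric.isClosed_sphere.measurableSet
  have hptwise : ∀ z ∈ Metric.sphere (0 : EuclideanSpace ℝ (Fin (n+1))) 1,
      Real.exp (-‖x + (c*t) • z‖ ^ 2 / (a*t)) =
      Real.exp (-(r - c*t)^2 / (a*t)) * Real.exp (-lam * ‖z + e‖^2) := by
    intro z hz
    have hzn : ‖z‖ = 1 := mem_sphere_zero_iff_norm.mp hz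
    rw [← Real.exp_add]
    congr 1
    have hnx : ‖x + (c*t) • z‖^2 = r^2 + 2*((c*t)*r)*(⟪e, z⟫) + (c*t)^2 := by
      rw [hxe, norm_add_sq_real, norm_smul, norm_smul, real_inner_smul_left,
        real_inner_smul_right, he, hzn]
      rw [Real.norm_eq_abs, Real.norm_eq_abs, abs_of_nonneg hr0,
        abs_of_nonneg (by positivity : (0:ℝ) ≤ c*t)]
      ring
    have hze : ‖z + e‖^2 = 2 + 2*(⟪e, z⟫) := by
      rw [norm_add_sq_real, hzn, he, real_inner_comm]
      ring
    rw [hnx, hze, hlamdef]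
    field_simp
    ring
  rw [MeasureTheory.setIntegral_congr_fun hSmeas hptwise, MeasureTheory.integral_const_mul]
  have hIle := hlap lam hlam0 e he
  have hexp0 : (0:ℝ) ≤ Real.exp (-(r - c*t)^2 / (a*t)) := (Real.exp_pos _).le
  have hstep : Real.exp (-(r - c*t)^2 / (a*t)) *
      (∫ z in Metric.sphere (0 : EuclideanSpace ℝ (Fin (n+1))) 1,
        Real.exp (-lam * ‖z + e‖^2) ∂μH[(n:ℝ)]) ≤
      Real.exp (-(r - c*t)^2 / (a*t)) * (C₁ * (1 + lam) ^ (-(n:ℝ)/2)) :=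
    mul_le_mul_of_nonneg_left hIle hexp0
  refine le_trans hstep ?_
  -- now a purely scalar inequality
  set q : ℝ := (r - c*t)^2 with hq
  have hq0 : 0 ≤ q := sq_nonneg _
  have hsplitexp : Real.exp (-q / (a*t)) =
      Real.exp (-q / (4*a*t)) * Real.exp (-(3*q) / (4*a*t)) := by
    rw [← Real.exp_add]
    congr 1
    field_simp
    ring
  have hstar : Real.exp (-(3*q) / (4*a*t)) * (1 + lam) ^ (-(n:ℝ)/2) ≤
      (C₂ + m₀ ^ (-(n:ℝ)/2)) * (1 + t) ^ (-(n:ℝ)/2) := by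
    have h1t : (0:ℝ) < 1 + t := by linarith
    have hrpt : (0:ℝ) < (1 + t) ^ (-(n:ℝ)/2) := Real.rpow_pos_of_pos h1t _
    have hm₀rp : (0:ℝ) < m₀ ^ (-(n:ℝ)/2) := Real.rpow_pos_of_pos hm₀0 _
    have hexple : Real.exp (-(3*q) / (4*a*t)) ≤ 1 :=
      Real.exp_le_one_iff.mpr (div_nonpos_of_nonpos_of_nonneg (by linarith) (by positivity))
    rcases le_or_gt (c*t/2) r with hrc | hrc
    · -- r large
      have hlamge : c^2*t/(2*a) ≤ lam := by
        rw [hlamdef]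
        rw [show c^2*t/(2*a) = (c*(c*t/2))/a by ring]
        exact (div_le_div_iff_of_pos_right ha).mpr (mul_le_mul_of_nonneg_left hrc hc.le)
      have hbase : m₀ * (1 + t) ≤ 1 + lam := by
        have d1 : m₀ ≤ 1 := min_le_left _ _
        have d2 : m₀ ≤ c^2/(2*a) := min_le_right _ _
        have d3 : m₀ * t ≤ (c^2/(2*a)) * t := mul_le_mul_of_nonneg_right d2 ht.le
        have d4 : (c^2/(2*a)) * t = c^2*t/(2*a) := by ring
        nlinarith
      have hrle : (1 + lam) ^ (-(n:ℝ)/2) ≤ m₀ ^ (-(n:ℝ)/2) * (1 + t) ^ (-(n:ℝ)/2) := by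
        have h1 : (1 + lam) ^ (-(n:ℝ)/2) ≤ (m₀ * (1 + t)) ^ (-(n:ℝ)/2) := by
          rw [show -(n:ℝ)/2 = -((n:ℝ)/2) by ring]
          exact SGB.rpow_neg_mono (by positivity) hbase _ (by positivity)
        rw [Real.mul_rpow hm₀0.le h1t.le] at h1
        exact h1
      calc Real.exp (-(3*q) / (4*a*t)) * (1 + lam) ^ (-(n:ℝ)/2)
          ≤ 1 * (m₀ ^ (-(n:ℝ)/2) * (1 + t) ^ (-(n:ℝ)/2)) := by
            apply mul_le_mul hexple hrle (Real.rpow_pos_of_pos (by linarith) _).le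
            norm_num
        _ ≤ (C₂ + m₀ ^ (-(n:ℝ)/2)) * (1 + t) ^ (-(n:ℝ)/2) := by nlinarith
    · -- r small
      have hqge : (c*t/2)^2 ≤ q := by
        rw [hq, show (r - c*t)^2 = (c*t - r)^2 by ring]
        apply pow_le_pow_left₀ (by positivity) (by linarith)
      have hexple2 : Real.exp (-(3*q) / (4*a*t)) ≤
          C₂ * (1 + t) ^ (-((n:ℝ)/2)) := by
        have hgam : (3*c^2/(16*a)) * t ≤ 3*q / (4*a*t) := by
          rw [show (3*c^2/(16*a)) * t = 3*c^2*t/(16*a) by ring,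
            div_le_div_iff₀ (by positivity) (by positivity)]
          linarith [mul_le_mul_of_nonneg_left hqge ha.le]
        have h2 : Real.exp (-(3*q / (4*a*t))) ≤ Real.exp (-((3*c^2/(16*a)) * t)) := by
          apply Real.exp_le_exp.mpr
          linarith
        have h3 := SGB.exp_neg_le C₂ ((n:ℝ)/2) ((3*c^2/(16*a)) * t) t h1t (hpe t ht.le)
        calc Real.exp (-(3*q) / (4*a*t)) = Real.exp (-(3*q / (4*a*t))) := by rw [neg_div]
          _ ≤ Real.exp (-((3*c^2/(16*a)) * t)) := h2
          _ ≤ C₂ * (1 + t) ^ (-((n:ℝ)/2)) := h3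
      have hlamle : (1 + lam) ^ (-(n:ℝ)/2) ≤ 1 := by
        apply Real.rpow_le_one_of_one_le_of_nonpos (by linarith)
        have : (0:ℝ) ≤ (n:ℝ)/2 := by positivity
        linarith
      calc Real.exp (-(3*q) / (4*a*t)) * (1 + lam) ^ (-(n:ℝ)/2)
          ≤ (C₂ * (1 + t) ^ (-((n:ℝ)/2))) * 1 := by
            apply mul_le_mul hexple2 hlamle (Real.rpow_pos_of_pos (by linarith) _).le
            positivity
        _ = C₂ * (1 + t) ^ (-(n:ℝ)/2) := by
            rw [show -((n:ℝ)/2) = -(n:ℝ)/2 by ring]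
            ring
        _ ≤ (C₂ + m₀ ^ (-(n:ℝ)/2)) * (1 + t) ^ (-(n:ℝ)/2) := by nlinarith
  calc Real.exp (-q / (a*t)) * (C₁ * (1 + lam) ^ (-(n:ℝ)/2))
      = C₁ * (Real.exp (-(3*q) / (4*a*t)) * (1 + lam) ^ (-(n:ℝ)/2)) *
        Real.exp (-q / (4*a*t)) := by
        rw [hsplitexp]
        ring
    _ ≤ C₁ * ((C₂ + m₀ ^ (-(n:ℝ)/2)) * (1 + t) ^ (-(n:ℝ)/2)) *
        Real.exp (-q / (4*a*t)) := by
        apply mul_le_mul_of_nonneg_right _ (Real.exp_pos _).le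
        exact mul_le_mul_of_nonneg_left hstar hC₁.le
    _ = C₁ * (C₂ + m₀ ^ (-(n:ℝ)/2)) * (1 + t) ^ (-(n:ℝ)/2) *
        Real.exp (-q / (4*a*t)) := by ring
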